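/- (Nonvanishing of orthosymplectic Kostka polynomials.) With notation as above (odd case), if $(\lambda_0,\lambda_1) \ge (\mu_0,\mu_1)$, i.e. $(\lambda_0,\lambda_1)-(\mu_0,\mu_1)$ lies in the $\mathbb{N}$-span of $R^{N+}_{\bar 1}$, then $K^N_{(\lambda_0,\lambda_1),(\mu_0,\mu_1)}(q) \neq 0$. More precisely, writing $(\lambda_0,\lambda_1)-(\mu_0,\mu_1)$ as a sum of $d_{\max}$ simple roots of $R^{N+}_{\bar 1}$ (the maximal possible number of summands), the coefficient of $q^{d_{\max}}$ in $K^N_{(\lambda_0,\lambda_1),(\mu_0,\mu_1)}(q)$ is nonzero: the top-degree term of $L^N_{(\lambda_0-\mu_0,\lambda_1-\mu_1)}(q)$ is not cancelled by any summand with $(w_0,w_1) \neq (e,e)$ in the alternating sum defining $K^N$. -/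

import Mathlib

open Finset

/-- The set of odd positive roots of the mixed Borel of `𝔬𝔰𝔭(2n|2n)` (odd case). -/
def oddRset (n : ℕ) (M : Type*) [AddCommGroup M] [Module ℚ M]
    (ε δ : Fin n → M) : Set M :=
  {x | ∃ i j : Fin n, x = ε i + δ j} ∪
  {x | ∃ i j : Fin n, i < j ∧ x = ε i - δ j} ∪
  {x | ∃ i j : Fin n, i ≤ j ∧ x = δ i - ε j}

/-- `p_d`: the number of unordered partitions of `α` into a sum of `d` elements of
`Rset` (counted with multiplicity), i.e. the number of multisets of size `d` supported
on `Rset` with sum `α`. This is the coefficient of `q^d` in `L^N_α(q)`. -/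
noncomputable def partCount (M : Type*) [AddCommGroup M] (Rset : Set M)
    (d : ℕ) (α : M) : ℕ :=
  Set.ncard {m : Multiset M | (∀ x ∈ m, x ∈ Rset) ∧ Multiset.card m = d ∧ m.sum = α}

/-- Sign attached to a sign-change datum. -/
def sgnB (b : Bool) : ℚ := if b then -1 else 1

/-- A signed permutation `(σ, ζ)` acting on coordinate vectors. -/
def actSigned (n : ℕ) (σ : Equiv.Perm (Fin n)) (ζ : Fin n → Bool)
    (x : Fin n → ℚ) : Fin n → ℚ :=
  fun i => sgnB (ζ i) * x (σ i)

/-- `ρ₀ = ∑ (n−i) εᵢ` in coordinates (type `Dₙ`), 1-based `i`. -/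
def rho0 (n : ℕ) : Fin n → ℚ := fun i => (n : ℚ) - 1 - (i : ℕ)

/-- `ρ₁ = ∑ (n+1−j) δⱼ` in coordinates (type `Cₙ`), 1-based `j`. -/
def rho1 (n : ℕ) : Fin n → ℚ := fun j => (n : ℚ) - (j : ℕ)

/-- The vector `∑ c₀ᵢ εᵢ + ∑ c₁ⱼ δⱼ`. -/
def vecOf (n : ℕ) (M : Type*) [AddCommGroup M] [Module ℚ M]
    (ε δ : Fin n → M) (c0 c1 : Fin n → ℚ) : M :=
  (∑ i : Fin n, c0 i • ε i) + (∑ j : Fin n, c1 j • δ j)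

/-- The coefficient of `q^d` in the orthosymplectic Kostka polynomial
`K^N_{(λ₀,λ₁),(μ₀,μ₁)}(q)` (odd case), given by the Lusztig–Kato alternating sum over
the Weyl groups `W₀` (type `Dₙ`: signed permutations with evenly many sign changes) and
`W₁` (type `Cₙ`: all signed permutations). -/
noncomputable def ospKostkaCoeff (n : ℕ) (M : Type*) [AddCommGroup M] [Module ℚ M]
    (ε δ : Fin n → M) (l0 l1 m0 m1 : Fin n → ℤ) (d : ℕ) : ℚ :=
  ∑ σ0 : Equiv.Perm (Fin n),
    ∑ ζ0 ∈ Finset.univ.filter (fun ζ : Fin n → Bool => (∏ i, sgnB (ζ i)) = 1),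
      ∑ σ1 : Equiv.Perm (Fin n), ∑ ζ1 : Fin n → Bool,
        ((Equiv.Perm.sign σ0 : ℤ) : ℚ) * ((Equiv.Perm.sign σ1 : ℤ) : ℚ)
          * (∏ i, sgnB (ζ1 i))
          * (partCount M (oddRset n M ε δ) d
              (vecOf n M ε δ
                (fun i => actSigned n σ0 ζ0 (fun t => (l0 t : ℚ) + rho0 n t) i
                  - rho0 n i - (m0 i : ℚ))
                (fun j => actSigned n σ1 ζ1 (fun t => (l1 t : ℚ) + rho1 n t) j
                  - rho1 n j - (m1 j : ℚ))) : ℚ)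

/- ===== Auxiliary lemmas ===== -/

lemma sgnB_mul_le_abs (b : Bool) (t : ℚ) : sgnB b * t ≤ |t| := by
  cases b
  · simpa [sgnB] using le_abs_self t
  · simpa [sgnB] using neg_le_abs t

lemma signedRearr {n : ℕ} (a x : Fin n → ℚ) (ha : StrictAnti a) (ha0 : ∀ i, 0 ≤ a i)
    (hx : StrictAnti x) (hxx : ∀ i j : Fin n, i ≠ j → 0 < x i + x j)
    (hax : ∀ i, a i = 0 ∨ 0 ≤ x i)
    (σ : Equiv.Perm (Fin n)) (ζ : Fin n → Bool) :
    (∑ i, a i * (sgnB (ζ i) * x (σ i)) ≤ ∑ i, a i * x i) ∧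
    ((∑ i, a i * (sgnB (ζ i) * x (σ i)) = ∑ i, a i * x i) →
      ∀ i, a i = 0 ∨ (σ i = i ∧ (ζ i = false ∨ x i = 0))) := by
  classical
  set x' : Fin n → ℚ := fun i => |x i| with hx'def
  have habs : ∀ i j : Fin n, i < j → x' j < x i := by
    intro i j hij
    have h1 : x j < x i := hx hij
    have h2 : 0 < x i + x j := hxx i j (ne_of_lt hij)
    have : |x j| < x i := abs_lt.2 ⟨by linarith, h1⟩
    simpa [x'] using this
  have hx' : StrictAnti x' := by
    intro i j hij
    have h3 := habs i j hij
    have h4 : 0 < x i := lt_of_le_of_lt (abs_nonneg _) h3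
    have : x' i = x i := abs_of_pos h4
    rw [this]; exact h3
  have haxeq : ∀ i, a i * x' i = a i * x i := by
    intro i; rcases hax i with h | h
    · simp [h]
    · simp [x', abs_of_nonneg h]
  have hmono : Monovary a x' := by
    intro i j hij
    rcases lt_trichotomy i j with h | h | h
    · exact absurd hij (not_lt.2 (hx'.antitone h.le))
    · subst h; exact le_rfl
    · exact (ha h).le
  have step1 : ∀ i : Fin n, a i * (sgnB (ζ i) * x (σ i)) ≤ a i * x' (σ i) := fun i =>
    mul_le_mul_of_nonneg_left (sgnB_mul_le_abs _ _) (ha0 i)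
  have hle1 : ∑ i, a i * (sgnB (ζ i) * x (σ i)) ≤ ∑ i, a i * x' (σ i) :=
    Finset.sum_le_sum fun i _ => step1 i
  have hle2 : ∑ i, a i * x' (σ i) ≤ ∑ i, a i * x' i :=
    hmono.sum_mul_comp_perm_le_sum_mul
  have heq3 : ∑ i, a i * x' i = ∑ i, a i * x i := Finset.sum_congr rfl fun i _ => haxeq i
  constructor
  · linarith
  intro heq
  have heqA : ∑ i, a i * (sgnB (ζ i) * x (σ i)) = ∑ i, a i * x' (σ i) :=
    le_antisymm hle1 (by linarith)
  have heqB : ∑ i, a i * x' (σ i) = ∑ i, a i * x' i := le_antisymm hle2 (by linarith)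
  have hmono2 : Monovary a (x' ∘ σ) := (hmono.sum_mul_comp_perm_eq_sum_mul_iff).1 heqB
  have hσmono : StrictMono (σ : Fin n → Fin n) := by
    intro i j hij
    rcases lt_trichotomy (σ i) (σ j) with h | h | h
    · exact h
    · exact absurd (σ.injective h) (ne_of_lt hij)
    · have hx'' : (x' ∘ σ) i < (x' ∘ σ) j := hx' h
      exact absurd (hmono2 hx'') (not_le.2 (ha hij))
  have hσid : ∀ i, σ i = i := by
    have hfg : Set.range (σ : Fin n → Fin n) = Set.range (id : Fin n → Fin n) := by
      rw [σ.surjective.range_eq, Set.range_id]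
    have h5 : (σ : Fin n → Fin n) = id := (hσmono.range_inj strictMono_id).1 hfg
    exact fun i => congrFun h5 i
  have hterm : ∀ i ∈ Finset.univ, a i * (sgnB (ζ i) * x (σ i)) = a i * x' (σ i) :=
    (Finset.sum_eq_sum_iff_of_le (fun i _ => step1 i)).1 heqA
  intro i
  by_cases hai : a i = 0
  · exact Or.inl hai
  right
  refine ⟨hσid i, ?_⟩
  have hxge : 0 ≤ x i := (hax i).resolve_left hai
  have hx'i : x' i = x i := abs_of_nonneg hxge
  have h1 := hterm i (Finset.mem_univ i)
  rw [hσid i, hx'i] at h1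
  have h2 : sgnB (ζ i) * x i = x i := mul_left_cancel₀ hai h1
  cases hζ : ζ i
  · exact Or.inl rfl
  · right
    rw [hζ] at h2
    simp only [sgnB, if_true] at h2
    linarith

lemma Dside_lt {n : ℕ} (a x : Fin n → ℚ) (ha : StrictAnti a) (ha0 : ∀ i, 0 ≤ a i)
    (haNZ : ∀ i : Fin n, (i : ℕ) < n - 1 → a i ≠ 0)
    (hx : StrictAnti x) (hxx : ∀ i j : Fin n, i ≠ j → 0 < x i + x j)
    (hxpos : ∀ i : Fin n, (i : ℕ) < n - 1 → 0 < x i)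
    (hax : ∀ i, a i = 0 ∨ 0 ≤ x i)
    (σ : Equiv.Perm (Fin n)) (ζ : Fin n → Bool) (hζ : (∏ i, sgnB (ζ i)) = 1)
    (hne : ¬(σ = 1 ∧ ζ = fun _ => false)) :
    ∑ i, a i * (sgnB (ζ i) * x (σ i)) < ∑ i, a i * x i := by
  obtain ⟨hle, heqc⟩ := signedRearr a x ha ha0 hx hxx hax σ ζ
  rcases lt_or_eq_of_le hle with h | h
  · exact h
  exfalso
  apply hne
  have hconc := heqc h
  rcases Nat.eq_zero_or_pos n with hn | hn
  · subst hn
    exact ⟨Equiv.ext fun i => i.elim0, funext fun i => i.elim0⟩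
  have hsmall : ∀ i : Fin n, (i : ℕ) < n - 1 → σ i = i ∧ ζ i = false := by
    intro i hi
    rcases hconc i with h1 | ⟨h1, h2⟩
    · exact absurd h1 (haNZ i hi)
    refine ⟨h1, ?_⟩
    rcases h2 with h2 | h2
    · exact h2
    · exact absurd h2 (ne_of_gt (hxpos i hi))
  set last : Fin n := ⟨n - 1, by omega⟩ with hlast
  have hne_last : ∀ i : Fin n, i ≠ last → (i : ℕ) < n - 1 := by
    intro i hi
    have h1 := i.isLt
    have h2 : (i : ℕ) ≠ n - 1 := by
      intro hc
      exact hi (Fin.ext (by rw [hc, hlast]))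
    omega
  have hσ : σ = 1 := by
    apply Equiv.ext
    intro i
    simp only [Equiv.Perm.coe_one, id_eq]
    rcases eq_or_ne i last with hi | hi
    · rw [hi]
      rcases eq_or_ne (σ last) last with h4 | h4
      · exact h4
      · exfalso
        have h6 : σ (σ last) = σ last := (hsmall (σ last) (hne_last _ h4)).1
        exact h4 (σ.injective h6)
    · exact (hsmall i (hne_last i hi)).1
  refine ⟨hσ, funext fun i => ?_⟩
  rcases eq_or_ne i last with hi | hi
  · rw [hi]
    have hprod : (∏ j, sgnB (ζ j)) = sgnB (ζ last) := by
      apply Finset.prod_eq_single_of_mem last (Finset.mem_univ last)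
      intro b _ hb
      rw [(hsmall b (hne_last b hb)).2]
      simp [sgnB]
    rw [hprod] at hζ
    cases hc : ζ last
    · rfl
    · rw [hc] at hζ
      norm_num [sgnB] at hζ
  · exact (hsmall i (hne_last i hi)).2

lemma Cside_lt {n : ℕ} (a x : Fin n → ℚ) (ha : StrictAnti a) (ha0 : ∀ i, 0 < a i)
    (hx : StrictAnti x) (hxpos : ∀ i, 0 < x i)
    (σ : Equiv.Perm (Fin n)) (ζ : Fin n → Bool)
    (hne : ¬(σ = 1 ∧ ζ = fun _ => false)) :
    ∑ i, a i * (sgnB (ζ i) * x (σ i)) < ∑ i, a i * x i := by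
  obtain ⟨hle, heqc⟩ := signedRearr a x ha (fun i => (ha0 i).le) hx
    (fun i j _ => by have := hxpos i; have := hxpos j; linarith)
    (fun i => Or.inr (hxpos i).le) σ ζ
  rcases lt_or_eq_of_le hle with h | h
  · exact h
  exfalso
  apply hne
  have hconc : ∀ i, σ i = i ∧ ζ i = false := by
    intro i
    rcases heqc h i with h1 | ⟨h1, h2⟩
    · exact absurd h1 (ne_of_gt (ha0 i))
    refine ⟨h1, ?_⟩
    rcases h2 with h2 | h2
    · exact h2
    · exact absurd h2 (ne_of_gt (hxpos i))
  exact ⟨Equiv.ext fun i => (hconc i).1, funext fun i => (hconc i).2⟩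

lemma exists_lenF {n : ℕ} {M : Type*} [AddCommGroup M] [Module ℚ M]
    {ε δ : Fin n → M} (hli : LinearIndependent ℚ (Sum.elim ε δ)) (a b : Fin n → ℚ) :
    ∃ F : M →ₗ[ℚ] ℚ, (∀ i, F (ε i) = a i) ∧ (∀ j, F (δ j) = b j) := by
  classical
  set v := Sum.elim ε δ with hv
  have hinj : Function.Injective v := hli.injective
  have hsub : Set.range v ⊆ hli.linearIndepOn_id.extend (Set.subset_univ _) :=
    hli.linearIndepOn_id.subset_extend _
  set B : Module.Basis _ ℚ M := Module.Basis.extend hli.linearIndepOn_id with hB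
  set w : Fin n ⊕ Fin n → ℚ := Sum.elim a b with hw
  set g : hli.linearIndepOn_id.extend (Set.subset_univ _) → ℚ :=
    fun s => if h : ∃ p, v p = (s : M) then w h.choose else 0 with hg
  have key : ∀ p : Fin n ⊕ Fin n, (B.constr ℚ g) (v p) = w p := by
    intro p
    have hmem : v p ∈ hli.linearIndepOn_id.extend (Set.subset_univ _) := hsub ⟨p, rfl⟩
    have h1 : (Module.Basis.extend hli.linearIndepOn_id) ⟨v p, hmem⟩ = v p :=
      Module.Basis.extend_apply_self _ _
    rw [hB, ← h1, Module.Basis.constr_basis]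
    show g ⟨v p, hmem⟩ = w p
    have hex : ∃ q, v q = ((⟨v p, hmem⟩ : hli.linearIndepOn_id.extend (Set.subset_univ _)) : M) :=
      ⟨p, rfl⟩
    rw [hg]
    simp only [dif_pos hex]
    have h2 : hex.choose = p := hinj hex.choose_spec
    rw [h2]
  exact ⟨B.constr ℚ g, fun i => key (Sum.inl i), fun j => key (Sum.inr j)⟩

lemma mem_oddRset {n : ℕ} {M : Type*} [AddCommGroup M] [Module ℚ M]
    {ε δ : Fin n → M} {x : M} :
    x ∈ oddRset n M ε δ ↔ (∃ i j : Fin n, x = ε i + δ j) ∨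
      (∃ i j : Fin n, i < j ∧ x = ε i - δ j) ∨ (∃ i j : Fin n, i ≤ j ∧ x = δ i - ε j) := by
  simp [oddRset, Set.mem_union, Set.mem_setOf_eq, or_assoc]

lemma oddRset_finite (n : ℕ) (M : Type*) [AddCommGroup M] [Module ℚ M]
    (ε δ : Fin n → M) : (oddRset n M ε δ).Finite := by
  apply Set.Finite.union
  apply Set.Finite.union
  · exact (Set.finite_range (fun p : Fin n × Fin n => ε p.1 + δ p.2)).subset
      (by rintro x ⟨i, j, rfl⟩; exact ⟨(i, j), rfl⟩)
  · exact (Set.finite_range (fun p : Fin n × Fin n => ε p.1 - δ p.2)).subset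
      (by rintro x ⟨i, j, hij, rfl⟩; exact ⟨(i, j), rfl⟩)
  · exact (Set.finite_range (fun p : Fin n × Fin n => δ p.1 - ε p.2)).subset
      (by rintro x ⟨i, j, hij, rfl⟩; exact ⟨(i, j), rfl⟩)

lemma partSet_finite {M : Type*} [AddCommGroup M] {R : Set M} (hR : R.Finite)
    (d : ℕ) (α : M) :
    {m : Multiset M | (∀ x ∈ m, x ∈ R) ∧ Multiset.card m = d ∧ m.sum = α}.Finite := by
  classical
  have hsub : {m : Multiset M | (∀ x ∈ m, x ∈ R) ∧ Multiset.card m = d ∧ m.sum = α} ⊆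
      (fun s : Sym M d => (s : Multiset M)) '' ↑(hR.toFinset.sym d) := by
    rintro m ⟨h1, h2, _⟩
    exact ⟨Sym.mk m h2, by
      rw [Finset.mem_coe, Finset.mem_sym_iff]
      intro a ha
      exact hR.mem_toFinset.2 (h1 a ha), rfl⟩
  exact ((hR.toFinset.sym d).finite_toSet.image _).subset hsub

lemma partCount_ne_zero {M : Type*} [AddCommGroup M] {R : Set M} (hR : R.Finite)
    {d : ℕ} {α : M} :
    partCount M R d α ≠ 0 ↔
    {m : Multiset M | (∀ x ∈ m, x ∈ R) ∧ Multiset.card m = d ∧ m.sum = α}.Nonempty := by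
  rw [partCount, ← Set.ncard_pos (partSet_finite hR d α)]
  omega

lemma card_le_F {M : Type*} [AddCommGroup M] [Module ℚ M] (F : M →ₗ[ℚ] ℚ)
    (m : Multiset M) (h : ∀ x ∈ m, 1 ≤ F x) :
    (Multiset.card m : ℚ) ≤ F m.sum := by
  rw [map_multiset_sum]
  have h1 : (Multiset.card (m.map F)) • (1 : ℚ) ≤ (m.map F).sum :=
    Multiset.card_nsmul_le_sum (by simpa using h)
  simpa using h1

lemma card_eq_F {M : Type*} [AddCommGroup M] [Module ℚ M] (F : M →ₗ[ℚ] ℚ)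
    (m : Multiset M) (h : ∀ x ∈ m, F x = 1) :
    F m.sum = (Multiset.card m : ℚ) := by
  rw [map_multiset_sum]
  rw [Multiset.map_congr rfl h]
  simp [Multiset.map_const']

lemma antitone_adj {n : ℕ} (g : Fin n → ℤ)
    (h : ∀ i : ℕ, (hi : i + 1 < n) → g ⟨i + 1, hi⟩ ≤ g ⟨i, Nat.lt_of_succ_lt hi⟩) :
    ∀ i j : Fin n, i ≤ j → g j ≤ g i := by
  have key : ∀ k : ℕ, ∀ i j : Fin n, (j : ℕ) = (i : ℕ) + k → g j ≤ g i := by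
    intro k
    induction k with
    | zero =>
      intro i j hj
      have : j = i := Fin.ext (by omega)
      subst this; exact le_rfl
    | succ k ih =>
      intro i j hj
      have hlt : (i : ℕ) + k + 1 < n := by have := j.isLt; omega
      have h1 : g j ≤ g ⟨(i : ℕ) + k, by omega⟩ := by
        have h2 := h ((i : ℕ) + k) hlt
        have h3 : j = ⟨(i : ℕ) + k + 1, hlt⟩ := Fin.ext (by show (j : ℕ) = (i : ℕ) + k + 1; omega)
        exact le_of_eq_of_le (congrArg g h3) h2
      exact le_trans h1 (ih i ⟨(i : ℕ) + k, by omega⟩ rfl)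
  intro i j hij
  exact key ((j : ℕ) - (i : ℕ)) i j (by have := Fin.le_def.1 hij; omega)

section Decomp
variable {n : ℕ} {M : Type*} [AddCommGroup M] [Module ℚ M] {ε δ : Fin n → M}
  {F : M →ₗ[ℚ] ℚ}
  (hFε : ∀ i : Fin n, F (ε i) = 2 * ((n : ℚ) - 1 - (i : ℕ)))
  (hFδ : ∀ j : Fin n, F (δ j) = 2 * ((n : ℚ) - 1 - (j : ℕ)) + 1)

include hFε hFδ

lemma simple_de (i : Fin n) : δ i - ε i ∈ oddRset n M ε δ ∧ F (δ i - ε i) = 1 := by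
  refine ⟨mem_oddRset.2 (Or.inr (Or.inr ⟨i, i, le_rfl, rfl⟩)), ?_⟩
  rw [map_sub, hFε, hFδ]; ring

lemma simple_ed {i j : Fin n} (h : (j : ℕ) = (i : ℕ) + 1) :
    ε i - δ j ∈ oddRset n M ε δ ∧ F (ε i - δ j) = 1 := by
  refine ⟨mem_oddRset.2 (Or.inr (Or.inl ⟨i, j, by rw [Fin.lt_def]; omega, rfl⟩)), ?_⟩
  rw [map_sub, hFε, hFδ, h]; push_cast; ring

lemma simple_top (h : 0 < n) :
    ε (⟨n - 1, by omega⟩ : Fin n) + δ (⟨n - 1, by omega⟩ : Fin n) ∈ oddRset n M ε δ ∧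
    F (ε (⟨n - 1, by omega⟩ : Fin n) + δ (⟨n - 1, by omega⟩ : Fin n)) = 1 := by
  refine ⟨mem_oddRset.2 (Or.inl ⟨_, _, rfl⟩), ?_⟩
  rw [map_add, hFε, hFδ]
  show 2 * ((n : ℚ) - 1 - ((⟨n - 1, by omega⟩ : Fin n) : ℕ)) +
    (2 * ((n : ℚ) - 1 - ((⟨n - 1, by omega⟩ : Fin n) : ℕ)) + 1) = 1
  have h2 : (((⟨n - 1, by omega⟩ : Fin n) : ℕ) : ℚ) = (n : ℚ) - 1 := by
    show (((n - 1 : ℕ)) : ℚ) = (n : ℚ) - 1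
    push_cast [Nat.cast_sub h]
    ring
  rw [h2]; ring

lemma chain_ee : ∀ (k : ℕ) (i j : Fin n), (j : ℕ) = (i : ℕ) + k →
    ∃ m : Multiset M, (∀ x ∈ m, x ∈ oddRset n M ε δ ∧ F x = 1) ∧ m.sum = ε i - ε j := by
  intro k
  induction k with
  | zero =>
    intro i j hj
    have : j = i := Fin.ext (by omega)
    subst this
    exact ⟨0, by simp, by simp⟩
  | succ k ih =>
    intro i j hj
    have hlt : (i : ℕ) + k < n := by have := j.isLt; omega
    set j' : Fin n := ⟨(i : ℕ) + k, hlt⟩ with hj'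
    obtain ⟨m', hm', hs'⟩ := ih i j' rfl
    refine ⟨(δ j - ε j) ::ₘ (ε j' - δ j) ::ₘ m', ?_, ?_⟩
    · intro x hx
      rcases Multiset.mem_cons.1 hx with rfl | hx
      · exact simple_de hFε hFδ j
      rcases Multiset.mem_cons.1 hx with rfl | hx
      · exact simple_ed hFε hFδ (by simp [hj']; omega)
      · exact hm' x hx
    · simp only [Multiset.sum_cons, hs']; abel

lemma chain_dd : ∀ (k : ℕ) (i j : Fin n), (j : ℕ) = (i : ℕ) + k →
    ∃ m : Multiset M, (∀ x ∈ m, x ∈ oddRset n M ε δ ∧ F x = 1) ∧ m.sum = δ i - δ j := by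
  intro k
  induction k with
  | zero =>
    intro i j hj
    have : j = i := Fin.ext (by omega)
    subst this
    exact ⟨0, by simp, by simp⟩
  | succ k ih =>
    intro i j hj
    have hlt : (i : ℕ) + k < n := by have := j.isLt; omega
    set j' : Fin n := ⟨(i : ℕ) + k, hlt⟩ with hj'
    obtain ⟨m', hm', hs'⟩ := ih i j' rfl
    refine ⟨(ε j' - δ j) ::ₘ (δ j' - ε j') ::ₘ m', ?_, ?_⟩
    · intro x hx
      rcases Multiset.mem_cons.1 hx with rfl | hx
      · exact simple_ed hFε hFδ (by simp [hj']; omega)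
      rcases Multiset.mem_cons.1 hx with rfl | hx
      · exact simple_de hFε hFδ j'
      · exact hm' x hx
    · simp only [Multiset.sum_cons, hs']; abel

lemma decomp_root : ∀ r ∈ oddRset n M ε δ,
    ∃ m : Multiset M, (∀ x ∈ m, x ∈ oddRset n M ε δ ∧ F x = 1) ∧ m.sum = r := by
  intro r hr
  rcases mem_oddRset.1 hr with ⟨i, j, rfl⟩ | ⟨i, j, hij, rfl⟩ | ⟨i, j, hij, rfl⟩
  · have hn : 0 < n := i.pos
    set last : Fin n := ⟨n - 1, by omega⟩ with hlast
    obtain ⟨mE, hmE, hsE⟩ := chain_ee hFε hFδ ((last : ℕ) - (i : ℕ)) i last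
      (by have := i.isLt; simp [hlast]; omega)
    obtain ⟨mD, hmD, hsD⟩ := chain_dd hFε hFδ ((last : ℕ) - (j : ℕ)) j last
      (by have := j.isLt; simp [hlast]; omega)
    refine ⟨(ε last + δ last) ::ₘ (mE + mD), ?_, ?_⟩
    · intro x hx
      rcases Multiset.mem_cons.1 hx with rfl | hx
      · exact simple_top hFε hFδ hn
      rcases Multiset.mem_add.1 hx with hx | hx
      · exact hmE x hx
      · exact hmD x hx
    · rw [Multiset.sum_cons, Multiset.sum_add, hsE, hsD]; abel
  · have hij' : (i : ℕ) < (j : ℕ) := hij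
    set p : Fin n := ⟨(j : ℕ) - 1, by have := j.isLt; omega⟩ with hp
    obtain ⟨mE, hmE, hsE⟩ := chain_ee hFε hFδ ((p : ℕ) - (i : ℕ)) i p (by simp [hp]; omega)
    refine ⟨(ε p - δ j) ::ₘ mE, ?_, ?_⟩
    · intro x hx
      rcases Multiset.mem_cons.1 hx with rfl | hx
      · exact simple_ed hFε hFδ (by simp [hp]; omega)
      · exact hmE x hx
    · rw [Multiset.sum_cons, hsE]; abel
  · have hij' : (i : ℕ) ≤ (j : ℕ) := hij
    obtain ⟨mD, hmD, hsD⟩ := chain_dd hFε hFδ ((j : ℕ) - (i : ℕ)) i j (by omega)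
    refine ⟨(δ j - ε j) ::ₘ mD, ?_, ?_⟩
    · intro x hx
      rcases Multiset.mem_cons.1 hx with rfl | hx
      · exact simple_de hFε hFδ j
      · exact hmD x hx
    · rw [Multiset.sum_cons, hsD]; abel

lemma decomp_multiset : ∀ m : Multiset M, (∀ x ∈ m, x ∈ oddRset n M ε δ) →
    ∃ ms : Multiset M, (∀ x ∈ ms, x ∈ oddRset n M ε δ ∧ F x = 1) ∧ ms.sum = m.sum := by
  intro m
  induction m using Multiset.induction with
  | empty => exact fun _ => ⟨0, by simp, by simp⟩
  | cons a s ih =>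
    intro h
    obtain ⟨ms1, h1, e1⟩ := decomp_root hFε hFδ a (h a (Multiset.mem_cons_self a s))
    obtain ⟨ms2, h2, e2⟩ := ih fun x hx => h x (Multiset.mem_cons_of_mem hx)
    refine ⟨ms1 + ms2, ?_, ?_⟩
    · intro x hx
      rcases Multiset.mem_add.1 hx with hx | hx
      · exact h1 x hx
      · exact h2 x hx
    · rw [Multiset.sum_add, e1, e2, Multiset.sum_cons]

lemma one_le_F_root : ∀ r ∈ oddRset n M ε δ, 1 ≤ F r := by
  intro r hr
  rcases mem_oddRset.1 hr with ⟨i, j, rfl⟩ | ⟨i, j, hij, rfl⟩ | ⟨i, j, hij, rfl⟩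
  · rw [map_add, hFε, hFδ]
    have hi : ((i : ℕ) : ℚ) + 1 ≤ (n : ℚ) := by exact_mod_cast i.isLt
    have hj : ((j : ℕ) : ℚ) + 1 ≤ (n : ℚ) := by exact_mod_cast j.isLt
    linarith
  · rw [map_sub, hFε, hFδ]
    have : ((i : ℕ) : ℚ) + 1 ≤ ((j : ℕ) : ℚ) := by exact_mod_cast (Fin.lt_def.1 hij)
    linarith
  · rw [map_sub, hFε, hFδ]
    have : ((i : ℕ) : ℚ) ≤ ((j : ℕ) : ℚ) := by exact_mod_cast (Fin.le_def.1 hij)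
    linarith

end Decomp
/-- Nonvanishing of orthosymplectic Kostka polynomials: if `(λ₀,λ₁) ≥ (μ₀,μ₁)` (the
difference lies in the ℕ-span of the odd positive roots), then
`K^N_{(λ₀,λ₁),(μ₀,μ₁)}(q) ≠ 0`; more precisely, its coefficient in the maximal degree
`d_max` (the maximal number of summands in a decomposition of the difference into odd
positive roots) is nonzero. -/
theorem ospKostka_ne_zero_of_le
    (n : ℕ) (M : Type*) [AddCommGroup M] [Module ℚ M]
    (ε δ : Fin n → M) (hli : LinearIndependent ℚ (Sum.elim ε δ))
    (l0 l1 m0 m1 : Fin n → ℤ)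
    (hl0 : ∀ i : ℕ, (h : i + 1 < n) → l0 ⟨i + 1, h⟩ ≤ l0 ⟨i, by omega⟩)
    (hl0' : ∀ _h2 : 2 ≤ n, -l0 ⟨n - 1, by omega⟩ ≤ l0 ⟨n - 2, by omega⟩)
    (hl1 : ∀ i : ℕ, (h : i + 1 < n) → l1 ⟨i + 1, h⟩ ≤ l1 ⟨i, by omega⟩)
    (hl1' : ∀ i, 0 ≤ l1 i)
    (hm0 : ∀ i : ℕ, (h : i + 1 < n) → m0 ⟨i + 1, h⟩ ≤ m0 ⟨i, by omega⟩)
    (hm0' : ∀ _h2 : 2 ≤ n, -m0 ⟨n - 1, by omega⟩ ≤ m0 ⟨n - 2, by omega⟩)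
    (hm1 : ∀ i : ℕ, (h : i + 1 < n) → m1 ⟨i + 1, h⟩ ≤ m1 ⟨i, by omega⟩)
    (hm1' : ∀ i, 0 ≤ m1 i)
    (hge : (∑ i : Fin n, (l0 i - m0 i) • ε i) + (∑ j : Fin n, (l1 j - m1 j) • δ j)
        ∈ AddSubmonoid.closure (oddRset n M ε δ)) :
    (∃ d : ℕ, ospKostkaCoeff n M ε δ l0 l1 m0 m1 d ≠ 0) ∧
    (∃ dmax : ℕ,
      IsGreatest {d : ℕ | partCount M (oddRset n M ε δ) d
          ((∑ i : Fin n, (l0 i - m0 i) • ε i)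
            + (∑ j : Fin n, (l1 j - m1 j) • δ j)) ≠ 0} dmax ∧
      ospKostkaCoeff n M ε δ l0 l1 m0 m1 dmax ≠ 0) := by
  classical
  obtain ⟨F, hFε, hFδ⟩ := exists_lenF hli
    (fun i => 2 * ((n : ℚ) - 1 - (i : ℕ))) (fun j => 2 * ((n : ℚ) - 1 - (j : ℕ)) + 1)
  -- weight function facts
  have haD : StrictAnti (fun i : Fin n => 2 * ((n : ℚ) - 1 - ((i : ℕ) : ℚ))) := by
    intro i j hij
    have h1 : ((i : ℕ) : ℚ) < ((j : ℕ) : ℚ) := by exact_mod_cast (Fin.lt_def.1 hij)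
    dsimp only
    linarith
  have haD0 : ∀ i : Fin n, 0 ≤ 2 * ((n : ℚ) - 1 - ((i : ℕ) : ℚ)) := by
    intro i
    have h1 : ((i : ℕ) : ℚ) + 1 ≤ (n : ℚ) := by exact_mod_cast i.isLt
    linarith
  have haDNZ : ∀ i : Fin n, (i : ℕ) < n - 1 → 2 * ((n : ℚ) - 1 - ((i : ℕ) : ℚ)) ≠ 0 := by
    intro i hi
    have h1 : ((i : ℕ) : ℚ) + 2 ≤ (n : ℚ) := by
      exact_mod_cast (by omega : (i : ℕ) + 2 ≤ n)
    intro hc; linarith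
  have haC : StrictAnti (fun j : Fin n => 2 * ((n : ℚ) - 1 - ((j : ℕ) : ℚ)) + 1) := by
    intro i j hij
    have h1 : ((i : ℕ) : ℚ) < ((j : ℕ) : ℚ) := by exact_mod_cast (Fin.lt_def.1 hij)
    dsimp only
    linarith
  have haC0 : ∀ j : Fin n, 0 < 2 * ((n : ℚ) - 1 - ((j : ℕ) : ℚ)) + 1 := by
    intro j
    have h1 : ((j : ℕ) : ℚ) + 1 ≤ (n : ℚ) := by exact_mod_cast j.isLt
    linarith
  -- antitonicity of l0 and l1
  have hl0anti : ∀ i j : Fin n, i ≤ j → l0 j ≤ l0 i := antitone_adj l0 hl0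
  have hl1anti : ∀ i j : Fin n, i ≤ j → l1 j ≤ l1 i := antitone_adj l1 hl1
  -- the dominant vectors x0 and x1
  have hx0anti : StrictAnti (fun i : Fin n => (l0 i : ℚ) + rho0 n i) := by
    intro i j hij
    have h1 : ((l0 j : ℚ)) ≤ ((l0 i : ℚ)) := by exact_mod_cast hl0anti i j hij.le
    have h2 : ((i : ℕ) : ℚ) < ((j : ℕ) : ℚ) := by exact_mod_cast (Fin.lt_def.1 hij)
    simp only [rho0]
    linarith
  have hx1anti : StrictAnti (fun j : Fin n => (l1 j : ℚ) + rho1 n j) := by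
    intro i j hij
    have h1 : ((l1 j : ℚ)) ≤ ((l1 i : ℚ)) := by exact_mod_cast hl1anti i j hij.le
    have h2 : ((i : ℕ) : ℚ) < ((j : ℕ) : ℚ) := by exact_mod_cast (Fin.lt_def.1 hij)
    simp only [rho1]
    linarith
  have hx1pos : ∀ j : Fin n, 0 < (l1 j : ℚ) + rho1 n j := by
    intro j
    have h1 : (0 : ℚ) ≤ (l1 j : ℚ) := by exact_mod_cast hl1' j
    have h2 : ((j : ℕ) : ℚ) + 1 ≤ (n : ℚ) := by exact_mod_cast j.isLt
    simp only [rho1]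
    linarith
  have hl0p : ∀ _h2 : 2 ≤ n, (0 : ℤ) ≤ l0 ⟨n - 2, by omega⟩ := by
    intro h2
    have ha := hl0' h2
    have hb : l0 ⟨n - 1, by omega⟩ ≤ l0 ⟨n - 2, by omega⟩ := by
      have hc := hl0 (n - 2) (by omega)
      have he : (⟨n - 2 + 1, by omega⟩ : Fin n) = ⟨n - 1, by omega⟩ :=
        Fin.ext (by show n - 2 + 1 = n - 1; omega)
      rwa [he] at hc
    omega
  have hx0pos : ∀ i : Fin n, (i : ℕ) < n - 1 → 0 < (l0 i : ℚ) + rho0 n i := by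
    intro i hi
    have hn2 : 2 ≤ n := by have := i.isLt; omega
    have hip : i ≤ (⟨n - 2, by omega⟩ : Fin n) := by
      rw [Fin.le_def]; show (i : ℕ) ≤ n - 2; omega
    have h1 : l0 ⟨n - 2, by omega⟩ ≤ l0 i := hl0anti _ _ hip
    have h2 := hl0p hn2
    have h3 : (0 : ℚ) ≤ (l0 i : ℚ) := by exact_mod_cast le_trans h2 h1
    have h4 : ((i : ℕ) : ℚ) + 2 ≤ (n : ℚ) := by
      exact_mod_cast (by omega : (i : ℕ) + 2 ≤ n)
    simp only [rho0]
    linarith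
  have hx0xx : ∀ i j : Fin n, i ≠ j →
      0 < ((l0 i : ℚ) + rho0 n i) + ((l0 j : ℚ) + rho0 n j) := by
    intro i j hij
    have hn2 : 2 ≤ n := by
      have h1 := i.isLt; have h2 := j.isLt
      have h3 : (i : ℕ) ≠ (j : ℕ) := fun hc => hij (Fin.ext hc)
      omega
    have key : ∀ k l : Fin n, (k : ℕ) < (l : ℕ) →
        0 < ((l0 k : ℚ) + rho0 n k) + ((l0 l : ℚ) + rho0 n l) := by
      intro k l hkl
      have hkp : k ≤ (⟨n - 2, by omega⟩ : Fin n) := by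
        rw [Fin.le_def]; show (k : ℕ) ≤ n - 2; have := l.isLt; omega
      have hlq : l ≤ (⟨n - 1, by omega⟩ : Fin n) := by
        rw [Fin.le_def]; show (l : ℕ) ≤ n - 1; have := l.isLt; omega
      have h1 : l0 ⟨n - 2, by omega⟩ ≤ l0 k := hl0anti _ _ hkp
      have h2 : l0 ⟨n - 1, by omega⟩ ≤ l0 l := hl0anti _ _ hlq
      have h3 := hl0' hn2
      have h4 : (0 : ℤ) ≤ l0 k + l0 l := by omega
      have h5 : (0 : ℚ) ≤ (l0 k : ℚ) + (l0 l : ℚ) := by exact_mod_cast h4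
      have h6 : ((k : ℕ) : ℚ) + 2 ≤ (n : ℚ) := by
        exact_mod_cast (by omega : (k : ℕ) + 2 ≤ n)
      have h7 : ((l : ℕ) : ℚ) + 1 ≤ (n : ℚ) := by exact_mod_cast l.isLt
      simp only [rho0]
      linarith
    rcases Ne.lt_or_gt hij with h | h
    · exact key i j h
    · have := key j i h; linarith
  have hax0 : ∀ i : Fin n, 2 * ((n : ℚ) - 1 - ((i : ℕ) : ℚ)) = 0 ∨
      0 ≤ (l0 i : ℚ) + rho0 n i := by
    intro i
    rcases lt_or_ge (i : ℕ) (n - 1) with hi | hi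
    · exact Or.inr (hx0pos i hi).le
    · left
      have h1 : (i : ℕ) = n - 1 := by have := i.isLt; omega
      have h2 : ((i : ℕ) : ℚ) = (n : ℚ) - 1 := by
        rw [h1, Nat.cast_sub i.pos]
        norm_num
      rw [h2]; ring
  -- value of F on vecOf
  have hFβ : ∀ (σ0 : Equiv.Perm (Fin n)) (ζ0 : Fin n → Bool)
      (σ1 : Equiv.Perm (Fin n)) (ζ1 : Fin n → Bool),
      F (vecOf n M ε δ
        (fun i => actSigned n σ0 ζ0 (fun t => (l0 t : ℚ) + rho0 n t) i
          - rho0 n i - (m0 i : ℚ))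
        (fun j => actSigned n σ1 ζ1 (fun t => (l1 t : ℚ) + rho1 n t) j
          - rho1 n j - (m1 j : ℚ)))
      = ((∑ i : Fin n, (2 * ((n : ℚ) - 1 - ((i : ℕ) : ℚ))) * (sgnB (ζ0 i) * ((l0 (σ0 i) : ℚ) + rho0 n (σ0 i))))
        + (∑ j : Fin n, (2 * ((n : ℚ) - 1 - ((j : ℕ) : ℚ)) + 1) * (sgnB (ζ1 j) * ((l1 (σ1 j) : ℚ) + rho1 n (σ1 j)))))
        - ((∑ i : Fin n, (2 * ((n : ℚ) - 1 - ((i : ℕ) : ℚ))) * (rho0 n i + (m0 i : ℚ)))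
          + (∑ j : Fin n, (2 * ((n : ℚ) - 1 - ((j : ℕ) : ℚ)) + 1) * (rho1 n j + (m1 j : ℚ)))) := by
    intro σ0 ζ0 σ1 ζ1
    rw [vecOf, map_add, map_sum, map_sum]
    have e0 : ∀ i : Fin n,
        F ((actSigned n σ0 ζ0 (fun t => (l0 t : ℚ) + rho0 n t) i - rho0 n i - (m0 i : ℚ)) • ε i)
        = (2 * ((n : ℚ) - 1 - ((i : ℕ) : ℚ))) * (sgnB (ζ0 i) * ((l0 (σ0 i) : ℚ) + rho0 n (σ0 i)))
          - (2 * ((n : ℚ) - 1 - ((i : ℕ) : ℚ))) * (rho0 n i + (m0 i : ℚ)) := by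
      intro i
      rw [map_smul, hFε, smul_eq_mul]
      simp only [actSigned]
      ring
    have e1 : ∀ j : Fin n,
        F ((actSigned n σ1 ζ1 (fun t => (l1 t : ℚ) + rho1 n t) j - rho1 n j - (m1 j : ℚ)) • δ j)
        = (2 * ((n : ℚ) - 1 - ((j : ℕ) : ℚ)) + 1) * (sgnB (ζ1 j) * ((l1 (σ1 j) : ℚ) + rho1 n (σ1 j)))
          - (2 * ((n : ℚ) - 1 - ((j : ℕ) : ℚ)) + 1) * (rho1 n j + (m1 j : ℚ)) := by
      intro j
      rw [map_smul, hFδ, smul_eq_mul]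
      simp only [actSigned]
      ring
    rw [Finset.sum_congr rfl fun i _ => e0 i, Finset.sum_congr rfl fun j _ => e1 j,
      Finset.sum_sub_distrib, Finset.sum_sub_distrib]
    ring
  set αv := (∑ i : Fin n, (l0 i - m0 i) • ε i) + (∑ j : Fin n, (l1 j - m1 j) • δ j) with hαv
  have hFαv : F αv
      = ((∑ i : Fin n, (2 * ((n : ℚ) - 1 - ((i : ℕ) : ℚ))) * ((l0 i : ℚ) + rho0 n i))
        + (∑ j : Fin n, (2 * ((n : ℚ) - 1 - ((j : ℕ) : ℚ)) + 1) * ((l1 j : ℚ) + rho1 n j)))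
        - ((∑ i : Fin n, (2 * ((n : ℚ) - 1 - ((i : ℕ) : ℚ))) * (rho0 n i + (m0 i : ℚ)))
          + (∑ j : Fin n, (2 * ((n : ℚ) - 1 - ((j : ℕ) : ℚ)) + 1) * (rho1 n j + (m1 j : ℚ)))) := by
    rw [hαv, map_add, map_sum, map_sum]
    have e0 : ∀ i : Fin n, F ((l0 i - m0 i) • ε i)
        = (2 * ((n : ℚ) - 1 - ((i : ℕ) : ℚ))) * ((l0 i : ℚ) + rho0 n i)
          - (2 * ((n : ℚ) - 1 - ((i : ℕ) : ℚ))) * (rho0 n i + (m0 i : ℚ)) := by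
      intro i
      rw [← Int.cast_smul_eq_zsmul ℚ, map_smul, hFε, smul_eq_mul]
      push_cast
      ring
    have e1 : ∀ j : Fin n, F ((l1 j - m1 j) • δ j)
        = (2 * ((n : ℚ) - 1 - ((j : ℕ) : ℚ)) + 1) * ((l1 j : ℚ) + rho1 n j)
          - (2 * ((n : ℚ) - 1 - ((j : ℕ) : ℚ)) + 1) * (rho1 n j + (m1 j : ℚ)) := by
      intro j
      rw [← Int.cast_smul_eq_zsmul ℚ, map_smul, hFδ, smul_eq_mul]
      push_cast
      ring
    rw [Finset.sum_congr rfl fun i _ => e0 i, Finset.sum_congr rfl fun j _ => e1 j,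
      Finset.sum_sub_distrib, Finset.sum_sub_distrib]
    ring
  -- maximal decomposition
  have hRfin := oddRset_finite n M ε δ
  obtain ⟨mroot, hmroot, hmsum⟩ := AddSubmonoid.exists_multiset_of_mem_closure hge
  obtain ⟨msimp, hmsimp, hssum⟩ := decomp_multiset hFε hFδ mroot hmroot
  rw [hmsum] at hssum
  set dmax := Multiset.card msimp with hdmax
  have hFα : F αv = (dmax : ℚ) := by
    rw [← hssum]
    exact card_eq_F F msimp fun x hx => (hmsimp x hx).2
  have hmemd : partCount M (oddRset n M ε δ) dmax αv ≠ 0 :=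
    (partCount_ne_zero hRfin).2 ⟨msimp, fun x hx => (hmsimp x hx).1, rfl, hssum⟩
  have hub : ∀ d : ℕ, partCount M (oddRset n M ε δ) d αv ≠ 0 → d ≤ dmax := by
    intro d hd
    obtain ⟨m, hm1, hm2, hm3⟩ := (partCount_ne_zero hRfin).1 hd
    have h1 : (d : ℚ) ≤ F αv := by
      rw [← hm3, ← hm2]
      exact card_le_F F m fun x hx => one_le_F_root hFε hFδ x (hm1 x hx)
    rw [hFα] at h1
    exact_mod_cast h1
  -- nonidentity terms have too small F value
  have hFβlt : ∀ (σ0 : Equiv.Perm (Fin n)) (ζ0 : Fin n → Bool)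
      (σ1 : Equiv.Perm (Fin n)) (ζ1 : Fin n → Bool), ((∏ i, sgnB (ζ0 i)) = 1) →
      ¬(σ0 = 1 ∧ ζ0 = (fun _ => false) ∧ σ1 = 1 ∧ ζ1 = (fun _ => false)) →
      F (vecOf n M ε δ
        (fun i => actSigned n σ0 ζ0 (fun t => (l0 t : ℚ) + rho0 n t) i
          - rho0 n i - (m0 i : ℚ))
        (fun j => actSigned n σ1 ζ1 (fun t => (l1 t : ℚ) + rho1 n t) j
          - rho1 n j - (m1 j : ℚ))) < (dmax : ℚ) := by
    intro σ0 ζ0 σ1 ζ1 hζ0 hne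
    rw [hFβ σ0 ζ0 σ1 ζ1, ← hFα, hFαv]
    have hD_le := (signedRearr (fun i : Fin n => 2 * ((n : ℚ) - 1 - ((i : ℕ) : ℚ)))
      (fun i : Fin n => (l0 i : ℚ) + rho0 n i) haD haD0 hx0anti hx0xx hax0 σ0 ζ0).1
    have hC_le := (signedRearr (fun j : Fin n => 2 * ((n : ℚ) - 1 - ((j : ℕ) : ℚ)) + 1)
      (fun j : Fin n => (l1 j : ℚ) + rho1 n j) haC (fun j => (haC0 j).le) hx1anti
      (fun i j _ => by have := hx1pos i; have := hx1pos j; linarith)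
      (fun j => Or.inr (hx1pos j).le) σ1 ζ1).1
    by_cases h0 : σ0 = 1 ∧ ζ0 = (fun _ => false)
    · have h1 : ¬(σ1 = 1 ∧ ζ1 = (fun _ => false)) := fun hc => hne ⟨h0.1, h0.2, hc.1, hc.2⟩
      have hC_lt := Cside_lt (fun j : Fin n => 2 * ((n : ℚ) - 1 - ((j : ℕ) : ℚ)) + 1)
        (fun j : Fin n => (l1 j : ℚ) + rho1 n j) haC haC0 hx1anti hx1pos σ1 ζ1 h1
      linarith
    · have hD_lt := Dside_lt (fun i : Fin n => 2 * ((n : ℚ) - 1 - ((i : ℕ) : ℚ)))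
        (fun i : Fin n => (l0 i : ℚ) + rho0 n i) haD haD0 haDNZ hx0anti hx0xx hx0pos hax0
        σ0 ζ0 hζ0 h0
      linarith
  -- nonidentity terms have vanishing partCount in degree dmax
  have hpc0 : ∀ (σ0 : Equiv.Perm (Fin n)) (ζ0 : Fin n → Bool)
      (σ1 : Equiv.Perm (Fin n)) (ζ1 : Fin n → Bool), ((∏ i, sgnB (ζ0 i)) = 1) →
      ¬(σ0 = 1 ∧ ζ0 = (fun _ => false) ∧ σ1 = 1 ∧ ζ1 = (fun _ => false)) →
      partCount M (oddRset n M ε δ) dmax (vecOf n M ε δ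
        (fun i => actSigned n σ0 ζ0 (fun t => (l0 t : ℚ) + rho0 n t) i
          - rho0 n i - (m0 i : ℚ))
        (fun j => actSigned n σ1 ζ1 (fun t => (l1 t : ℚ) + rho1 n t) j
          - rho1 n j - (m1 j : ℚ))) = 0 := by
    intro σ0 ζ0 σ1 ζ1 hζ0 hne
    by_contra hc
    obtain ⟨m, hm1, hm2, hm3⟩ := (partCount_ne_zero hRfin).1 hc
    have h1 : (dmax : ℚ) ≤ F (vecOf n M ε δ
        (fun i => actSigned n σ0 ζ0 (fun t => (l0 t : ℚ) + rho0 n t) i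
          - rho0 n i - (m0 i : ℚ))
        (fun j => actSigned n σ1 ζ1 (fun t => (l1 t : ℚ) + rho1 n t) j
          - rho1 n j - (m1 j : ℚ))) := by
      rw [← hm3, ← hm2]
      exact card_le_F F m fun x hx => one_le_F_root hFε hFδ x (hm1 x hx)
    exact absurd h1 (not_le.2 (hFβlt σ0 ζ0 σ1 ζ1 hζ0 hne))
  -- the identity term equals αv
  have hidv : vecOf n M ε δ
      (fun i => actSigned n 1 (fun _ => false) (fun t => (l0 t : ℚ) + rho0 n t) i
        - rho0 n i - (m0 i : ℚ))
      (fun j => actSigned n 1 (fun _ => false) (fun t => (l1 t : ℚ) + rho1 n t) j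
        - rho1 n j - (m1 j : ℚ)) = αv := by
    rw [hαv, vecOf]
    congr 1
    · apply Finset.sum_congr rfl
      intro i _
      have h1 : actSigned n 1 (fun _ => false) (fun t => (l0 t : ℚ) + rho0 n t) i
          - rho0 n i - (m0 i : ℚ) = ((l0 i - m0 i : ℤ) : ℚ) := by
        simp [actSigned, sgnB]
      rw [h1, Int.cast_smul_eq_zsmul]
    · apply Finset.sum_congr rfl
      intro j _
      have h1 : actSigned n 1 (fun _ => false) (fun t => (l1 t : ℚ) + rho1 n t) j
          - rho1 n j - (m1 j : ℚ) = ((l1 j - m1 j : ℤ) : ℚ) := by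
        simp [actSigned, sgnB]
      rw [h1, Int.cast_smul_eq_zsmul]
  -- collapse the alternating sum
  have hcoeff : ospKostkaCoeff n M ε δ l0 l1 m0 m1 dmax
      = (partCount M (oddRset n M ε δ) dmax αv : ℚ) := by
    rw [ospKostkaCoeff]
    rw [Finset.sum_eq_single_of_mem (1 : Equiv.Perm (Fin n)) (Finset.mem_univ _)
      (fun σ0 _ hσ0 => Finset.sum_eq_zero fun ζ0 hζ0 => Finset.sum_eq_zero fun σ1 _ =>
        Finset.sum_eq_zero fun ζ1 _ => by
          rw [hpc0 σ0 ζ0 σ1 ζ1 (Finset.mem_filter.1 hζ0).2 (fun hc => hσ0 hc.1)]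
          simp)]
    rw [Finset.sum_eq_single_of_mem (fun _ : Fin n => false)
      (Finset.mem_filter.2 ⟨Finset.mem_univ _, by simp [sgnB]⟩)
      (fun ζ0 hζ0 hζ0ne => Finset.sum_eq_zero fun σ1 _ =>
        Finset.sum_eq_zero fun ζ1 _ => by
          rw [hpc0 1 ζ0 σ1 ζ1 (Finset.mem_filter.1 hζ0).2 (fun hc => hζ0ne hc.2.1)]
          simp)]
    rw [Finset.sum_eq_single_of_mem (1 : Equiv.Perm (Fin n)) (Finset.mem_univ _)
      (fun σ1 _ hσ1 => Finset.sum_eq_zero fun ζ1 _ => by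
        rw [hpc0 1 (fun _ => false) σ1 ζ1 (by simp [sgnB]) (fun hc => hσ1 hc.2.2.1)]
        simp)]
    rw [Finset.sum_eq_single_of_mem (fun _ : Fin n => false) (Finset.mem_univ _)
      (fun ζ1 _ hζ1 => by
        rw [hpc0 1 (fun _ => false) 1 ζ1 (by simp [sgnB]) (fun hc => hζ1 hc.2.2.2)]
        simp)]
    rw [hidv]
    simp [sgnB]
  have hKne : ospKostkaCoeff n M ε δ l0 l1 m0 m1 dmax ≠ 0 := by
    rw [hcoeff]
    exact_mod_cast hmemd
  exact ⟨⟨dmax, hKne⟩, dmax, ⟨hmemd, fun d hd => hub d hd⟩, hKne⟩
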